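/- For all 0 < η < 1, 1 < α < 1/η, (t,s) ∈ [η/α, η]×[0,1], the Green's function satisfies G(t,s) ≥ k₀ g₀(s), where k₀ = η²/(2α²(1+α)) · min{α-1, 1} and g₀(s) = (1+α)/(1-αη) · s(1-s). Moreover 0 < k₀ < 1. -/

import Mathlib

open Set

noncomputable def greenG (η α t s : ℝ) : ℝ :=
  (1 / (2 * (1 - α * η))) *
    (if s ≤ min η t then (2 * t * s - s ^ 2) * (1 - α * η) + t ^ 2 * s * (α - 1)
     else if t ≤ s ∧ s ≤ η then t ^ 2 * (1 - α * η) + t ^ 2 * s * (α - 1)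
     else if η ≤ s ∧ s ≤ t then (2 * t * s - s ^ 2) * (1 - α * η) + t ^ 2 * (α * η - s)
     else t ^ 2 * (1 - s))

noncomputable def g0 (η α s : ℝ) : ℝ := (1 + α) / (1 - α * η) * (s * (1 - s))

noncomputable def k0 (η α : ℝ) : ℝ := η ^ 2 / (2 * α ^ 2 * (1 + α)) * min (α - 1) 1

theorem stmt1 (η α : ℝ) (hη0 : 0 < η) (hη1 : η < 1) (hα1 : 1 < α) (hα2 : α < 1 / η) :
    (∀ t ∈ Icc (η / α) η, ∀ s ∈ Icc (0:ℝ) 1,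
      k0 η α * g0 η α s ≤ greenG η α t s) ∧ 0 < k0 η α ∧ k0 η α < 1 := by
  have hαη : α * η < 1 := (lt_div_iff₀ hη0).mp hα2
  have hD : (0:ℝ) < 1 - α * η := by linarith
  have hα0 : (0:ℝ) < α := by linarith
  have hm1 : min (α - 1) 1 ≤ α - 1 := min_le_left _ _
  have hm2 : min (α - 1) 1 ≤ 1 := min_le_right _ _
  have hm0 : 0 < min (α - 1) 1 := lt_min (by linarith) one_pos
  set m := min (α - 1) 1 with hm
  have hk0pos : 0 < k0 η α := by
    unfold k0
    positivity
  have hk0lt : k0 η α < 1 := by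
    unfold k0
    rw [div_mul_eq_mul_div, div_lt_one (by positivity)]
    nlinarith
  refine ⟨?_, hk0pos, hk0lt⟩
  intro t ht s hs
  obtain ⟨ht1, ht2⟩ := ht
  obtain ⟨hs0, hs1⟩ := hs
  have ht0 : 0 < t := lt_of_lt_of_le (by positivity) ht1
  have htη : η ≤ α * t := by
    rw [div_le_iff₀ hα0] at ht1; nlinarith
  have ht2sq : η ^ 2 ≤ α ^ 2 * t ^ 2 := by nlinarith
  -- reduce to a polynomial inequality on the branch expression
  have main : ∀ E : ℝ, η ^ 2 * m * (s * (1 - s)) ≤ α ^ 2 * E →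
      k0 η α * g0 η α s ≤ 1 / (2 * (1 - α * η)) * E := by
    intro E hE
    have eq1 : k0 η α * g0 η α s
        = (η ^ 2 * m * (s * (1 - s))) / (α ^ 2 * (2 * (1 - α * η))) := by
      unfold k0 g0
      field_simp
      ring
    have eq2 : 1 / (2 * (1 - α * η)) * E = (α ^ 2 * E) / (α ^ 2 * (2 * (1 - α * η))) := by
      field_simp
    rw [eq1, eq2]
    apply div_le_div_of_nonneg_right hE (by positivity) |>.trans_eq rfl
  unfold greenG
  split_ifs with h1 h2 h3
  · -- s ≤ min η t, so s ≤ t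
    have hst : s ≤ t := le_trans h1 (min_le_right _ _)
    apply main
    nlinarith [mul_nonneg (mul_nonneg hs0 (by linarith : (0:ℝ) ≤ t - s)) hD.le,
      mul_nonneg (mul_nonneg hs0 hs0) hD.le,
      mul_nonneg (mul_nonneg hm0.le hs0) (by linarith : (0:ℝ) ≤ α ^ 2 * t ^ 2 - η ^ 2),
      mul_nonneg (mul_nonneg hs0 (sq_nonneg (α * t))) (by linarith : (0:ℝ) ≤ α - 1 - m),
      mul_nonneg hm0.le (mul_nonneg (sq_nonneg η) (sq_nonneg s))]
  · obtain ⟨hts, hsη⟩ := h2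
    apply main
    nlinarith [mul_nonneg (sq_nonneg (α * t)) hD.le,
      mul_nonneg (mul_nonneg hm0.le hs0) (by linarith : (0:ℝ) ≤ α ^ 2 * t ^ 2 - η ^ 2),
      mul_nonneg (mul_nonneg hs0 (sq_nonneg (α * t))) (by linarith : (0:ℝ) ≤ α - 1 - m),
      mul_nonneg hm0.le (mul_nonneg (sq_nonneg η) (sq_nonneg s))]
  · exfalso
    obtain ⟨hηs, hst⟩ := h3
    exact h1 (le_min (le_trans hst ht2) hst)
  · -- else: s > t and s > η
    have hts : t ≤ s := le_of_not_ge (fun h => h1 (le_min (h.trans ht2) h))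
    have hsη : ¬ s ≤ η := fun h => h2 ⟨hts, h⟩
    apply main
    have hms : 0 ≤ 1 - m * s := by nlinarith [mul_nonneg (by linarith : (0:ℝ) ≤ 1 - m) hs0]
    have q1 : 0 ≤ m * s * (1 - s) * (α ^ 2 * t ^ 2 - η ^ 2) :=
      mul_nonneg (mul_nonneg (mul_nonneg hm0.le hs0) (by linarith)) (by linarith)
    have q2 : 0 ≤ α ^ 2 * t ^ 2 * (1 - s) * (1 - m * s) :=
      mul_nonneg (mul_nonneg (by positivity) (by linarith)) hms
    have expand : α ^ 2 * (t ^ 2 * (1 - s)) - η ^ 2 * m * (s * (1 - s))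
        = m * s * (1 - s) * (α ^ 2 * t ^ 2 - η ^ 2) + α ^ 2 * t ^ 2 * (1 - s) * (1 - m * s) := by
      ring
    linarith
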